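/- Let r ≤ m be nonnegative integers, let u_1, …, u_t ∈ 𝔽₂^m be distinct points such that the degree-r evaluation vectors u_1^r, …, u_t^r are linearly independent over 𝔽₂, and let v ∈ 𝔽₂^m with v ∉ {u_1,…,u_t}. Then there exists a multilinear polynomial g ∈ 𝔽₂[x_1,…,x_m] of total degree at most r + 1 such that g(u_j) = 0 for every j ∈ [t] and g(v) = 1. -/

import Mathlib

open MvPolynomial

/-- The degree-`r` evaluation vector of a point `u ∈ 𝔽₂^m`. -/
def evalVec (m r : ℕ) (u : Fin m → ZMod 2) :
    {S : Finset (Fin m) // S.card ≤ r} → ZMod 2 :=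
  fun S => ∏ i ∈ S.1, u i

/-- A polynomial is multilinear if every variable occurs with individual degree at most 1. -/
def IsMultilinear {m : ℕ} (f : MvPolynomial (Fin m) (ZMod 2)) : Prop :=
  ∀ d ∈ f.support, ∀ i, d i ≤ 1

lemma zmod2_mul_self (x : ZMod 2) : x * x = x := by revert x; decide

lemma zmod2_ne_iff {x y : ZMod 2} (h : x ≠ y) : x + y = 1 := by revert x y; decide

lemma zmod2_ne_zero {x : ZMod 2} (h : x ≠ 0) : x = 1 := by revert x; decide

lemma prod_insert_idem {m : ℕ} (w : Fin m → ZMod 2) (i : Fin m) (S : Finset (Fin m)) :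
    ∏ j ∈ insert i S, w j = w i * ∏ j ∈ S, w j := by
  classical
  by_cases h : i ∈ S
  · rw [Finset.insert_eq_self.mpr h, ← Finset.mul_prod_erase S w h, ← mul_assoc,
      zmod2_mul_self]
  · exact Finset.prod_insert h

theorem stmt14 (m r t : ℕ) (hrm : r ≤ m)
    (u : Fin t → (Fin m → ZMod 2)) (hinj : Function.Injective u)
    (hind : LinearIndependent (ZMod 2) (fun j => evalVec m r (u j)))
    (v : Fin m → ZMod 2) (hv : ∀ i : Fin t, v ≠ u i) :
    ∃ g : MvPolynomial (Fin m) (ZMod 2),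
      IsMultilinear g ∧ g.totalDegree ≤ r + 1 ∧
      (∀ j : Fin t, eval (u j) g = 0) ∧ eval v g = 1 := by
  classical
  set W : Submodule (ZMod 2) ({S : Finset (Fin m) // S.card ≤ r + 1} → ZMod 2) :=
    Submodule.span (ZMod 2) (Set.range fun j => evalVec m (r+1) (u j)) with hW
  -- Key: v^{r+1} ∉ W
  have key : evalVec m (r+1) v ∉ W := by
    intro hmem
    rw [hW, Submodule.mem_span_range_iff_exists_fun] at hmem
    obtain ⟨c, hc⟩ := hmem
    have hres : ∀ (S : Finset (Fin m)) (hS : S.card ≤ r + 1),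
        ∑ j, c j * ∏ i ∈ S, u j i = ∏ i ∈ S, v i := by
      intro S hS
      have := congrFun hc ⟨S, hS⟩
      simpa [evalVec, Finset.sum_apply] using this
    -- At S = ∅ : sum of c j = 1, so some c j₀ = 1
    have h0 : ∑ j, c j = 1 := by simpa using hres ∅ (by simp)
    have hex : ∃ j₀, c j₀ ≠ 0 := by
      by_contra h
      push_neg at h
      simp [h] at h0
    obtain ⟨j₀, hj₀⟩ := hex
    obtain ⟨i, hi⟩ : ∃ i, v i ≠ u j₀ i := by
      by_contra h
      push_neg at h
      exact hv j₀ (funext h)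
    -- The coefficients b j := c j * (u j i + v i) give a dependence among the u_j^r
    have hdep : ∑ j, (c j * (u j i + v i)) • evalVec m r (u j) = 0 := by
      funext S
      obtain ⟨S, hS⟩ := S
      have h1 : ∑ j, c j * ∏ k ∈ S, u j k = ∏ k ∈ S, v k :=
        hres S (hS.trans (Nat.le_succ r))
      have h2 : ∑ j, c j * (u j i * ∏ k ∈ S, u j k) = v i * ∏ k ∈ S, v k := by
        have := hres (insert i S) ((Finset.card_insert_le i S).trans (by omega))
        simpa [prod_insert_idem] using this
      have h3 : ∑ j, c j * (v i * ∏ k ∈ S, u j k) = v i * ∏ k ∈ S, v k := by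
        calc ∑ j, c j * (v i * ∏ k ∈ S, u j k)
            = v i * ∑ j, c j * ∏ k ∈ S, u j k := by
              rw [Finset.mul_sum]; exact Finset.sum_congr rfl fun j _ => by ring
          _ = v i * ∏ k ∈ S, v k := by rw [h1]
      have : ∑ j, (c j * (u j i + v i)) * ∏ k ∈ S, u j k = 0 := by
        have hsum : ∑ j, (c j * (u j i * ∏ k ∈ S, u j k)
            + c j * (v i * ∏ k ∈ S, u j k)) = 0 := by
          rw [Finset.sum_add_distrib, h2, h3, CharTwo.add_self_eq_zero]
        rw [← hsum]
        exact Finset.sum_congr rfl fun j _ => by ring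
      simpa [evalVec, Finset.sum_apply, Pi.zero_apply, smul_eq_mul, mul_comm] using this
    have := Fintype.linearIndependent_iff.mp hind _ hdep j₀
    rw [zmod2_ne_iff (fun h => hi h.symm)] at this
    simp only [mul_one] at this
    exact hj₀ this
  -- Build a linear functional vanishing on W with value 1 at v^{r+1}
  have hx : Submodule.Quotient.mk (p := W) (evalVec m (r+1) v) ≠ 0 := by
    simpa [Submodule.Quotient.mk_eq_zero] using key
  obtain ⟨f, hf⟩ : ∃ f : Module.Dual (ZMod 2) (_ ⧸ W),
      f (Submodule.Quotient.mk (evalVec m (r+1) v)) ≠ 0 := by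
    by_contra h
    push_neg at h
    exact hx ((Module.forall_dual_apply_eq_zero_iff (ZMod 2) _).mp h)
  set φ : ({S : Finset (Fin m) // S.card ≤ r + 1} → ZMod 2) →ₗ[ZMod 2] ZMod 2 :=
    f.comp W.mkQ with hφ
  have hφu : ∀ j, φ (evalVec m (r+1) (u j)) = 0 := by
    intro j
    have : evalVec m (r+1) (u j) ∈ W := Submodule.subset_span ⟨j, rfl⟩
    simp [hφ, (Submodule.Quotient.mk_eq_zero W).mpr this]
  have hφv : φ (evalVec m (r+1) v) = 1 := zmod2_ne_zero hf
  -- the coefficient function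
  set c : {S : Finset (Fin m) // S.card ≤ r + 1} → ZMod 2 :=
    fun S => φ (fun T => if S = T then 1 else 0) with hcdef
  -- the exponent of the monomial for S
  set d : {S : Finset (Fin m) // S.card ≤ r + 1} → (Fin m →₀ ℕ) :=
    fun S => ∑ i ∈ S.1, Finsupp.single i 1 with hddef
  have hdapp : ∀ S i, d S i = if i ∈ S.1 then 1 else 0 := by
    intro S i
    rw [hddef]
    simp only [Finset.sum_apply', Finsupp.single_apply]
    simp [Finset.sum_ite_eq' S.1 i]
  set g : MvPolynomial (Fin m) (ZMod 2) :=
    ∑ S : {S : Finset (Fin m) // S.card ≤ r + 1}, monomial (d S) (c S) with hg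
  have heval : ∀ w : Fin m → ZMod 2, eval w g = φ (evalVec m (r+1) w) := by
    intro w
    rw [hg, map_sum]
    have h1 : ∀ S : {S : Finset (Fin m) // S.card ≤ r + 1},
        eval w (monomial (d S) (c S)) = evalVec m (r+1) w S * c S := by
      intro S
      rw [eval_monomial]
      rw [Finsupp.prod_fintype _ _ (fun i => pow_zero (w i))]
      have : ∀ i, w i ^ (d S i) = if i ∈ S.1 then w i else 1 := by
        intro i; rw [hdapp]; split <;> simp
      rw [mul_comm]
      congr 1
      simp only [this]
      rw [Finset.prod_ite_mem Finset.univ S.1 w, Finset.univ_inter]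
      rfl
    rw [Finset.sum_congr rfl fun S _ => h1 S]
    have := pi_eq_sum_univ (evalVec m (r+1) w)
    conv_rhs => rw [this]
    rw [map_sum]
    refine Finset.sum_congr rfl fun S _ => ?_
    rw [map_smul, smul_eq_mul, hcdef]
  refine ⟨g, ?_, ?_, ?_, ?_⟩
  · intro e he i
    rw [hg] at he
    have := Finset.mem_biUnion.mp (MvPolynomial.support_sum he)
    obtain ⟨S, _, hS⟩ := this
    have : e = d S := by
      replace hS : e ∈ MvPolynomial.support ((monomial (d S)) (c S)) := hS
      rw [MvPolynomial.mem_support_iff, MvPolynomial.coeff_monomial] at hS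
      by_contra hne
      rw [if_neg (fun h => hne h.symm)] at hS
      exact hS rfl
    rw [this, hdapp]
    split <;> simp
  · rw [hg]
    refine (totalDegree_finset_sum _ _).trans (Finset.sup_le fun S _ => ?_)
    refine (totalDegree_monomial_le _ _).trans ?_
    have : (d S).sum (fun _ => id) = S.1.card := by
      rw [Finsupp.sum_fintype _ _ (fun _ => rfl)]
      simp only [hdapp, id]
      rw [Finset.sum_ite_mem Finset.univ S.1, Finset.univ_inter]
      simp
    rw [this]; exact S.2
  · intro j; rw [heval, hφu]
  · rw [heval, hφv]
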